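/- There exists k_0 such that for every integer k ≥ k_0, setting n = ⌊(k/e)²·(π·e^{e²/2}·k³·ln k)^{1/k}⌋, the inequality n·ln n < C(n,k)·(1/k!) holds. -/

import Mathlib

/-- An ordered `k`-set (`k`-tuple of distinct elements of `V`), given as an
embedding `Fin k ↪ V`, is *consistent* with a (strict) linear order `r` on `V`
if its entries are increasing with respect to `r`. -/
def Consistent {k : ℕ} {V : Type*} (r : V → V → Prop) (e : Fin k ↪ V) : Prop :=
  ∀ i j : Fin k, i < j → r (e i) (e j)

/-- An *oriented `k`-uniform hypergraph* on `V`: a family of `k`-tuples of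
distinct elements of `V` (embeddings `Fin k ↪ V`) such that no two tuples have
the same underlying `k`-element set. -/
structure OrientedHypergraph (k : ℕ) (V : Type*) where
  edges : Finset (Fin k ↪ V)
  eq_of_range_eq : ∀ e ∈ edges, ∀ f ∈ edges, Set.range ⇑e = Set.range ⇑f → e = f

/-- *Property O*: for every linear order (given by its strict order relation `r`)
on the vertex set, some edge is consistent with it. -/
def PropertyO {k : ℕ} {V : Type*} (H : OrientedHypergraph k V) : Prop :=
  ∀ r : V → V → Prop, IsStrictTotalOrder V r → ∃ e ∈ H.edges, Consistent r e

/-- A *`k`-tournament*: an oriented `k`-uniform hypergraph containing a tuple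
for every `k`-element subset of the vertex set (such a tuple is unique by
`eq_of_range_eq`). -/
def IsTournament {k : ℕ} {V : Type*} (H : OrientedHypergraph k V) : Prop :=
  ∀ S : Finset V, S.card = k → ∃ e ∈ H.edges, Set.range ⇑e = ↑S
open Real Filter Finset

noncomputable def Xk (k : ℕ) : ℝ :=
  Real.pi * Real.exp (Real.exp 1 ^ 2 / 2) * (k : ℝ) ^ 3 * Real.log k

noncomputable def Lk (k : ℕ) : ℝ := Real.log (Xk k)

noncomputable def Ak (k : ℕ) : ℝ := ((k : ℝ) / Real.exp 1) ^ 2 * (Xk k) ^ (1 / (k : ℝ))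

lemma Xk_pos {k : ℕ} (hk : 2 ≤ k) : 0 < Xk k := by
  have h1 : (1 : ℝ) < (k : ℝ) := by exact_mod_cast hk.trans_lt' one_lt_two
  have := Real.log_pos h1
  unfold Xk
  positivity

lemma factorial_le_stirling (k : ℕ) (hk : 1 ≤ k) :
    (k.factorial : ℝ) ≤ Real.exp 1 * Real.sqrt k * ((k : ℝ) / Real.exp 1) ^ k := by
  obtain ⟨n, rfl⟩ := Nat.exists_eq_succ_of_ne_zero (Nat.one_le_iff_ne_zero.mp hk)
  have h1 : Stirling.stirlingSeq (n + 1) ≤ Stirling.stirlingSeq 1 := by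
    have hmono := Stirling.log_stirlingSeq'_antitone (Nat.zero_le n)
    simp only [Function.comp, Nat.succ_eq_add_one, Nat.zero_add] at hmono
    have hpos := Stirling.stirlingSeq'_pos n
    have hpos1 := Stirling.stirlingSeq'_pos 0
    rw [Nat.zero_add] at hpos1
    exact (Real.log_le_log_iff hpos hpos1).mp hmono
  rw [Stirling.stirlingSeq_one] at h1
  have hdef : Stirling.stirlingSeq (n + 1) =
      ((n+1).factorial : ℝ) / (Real.sqrt (2 * ((n+1:ℕ):ℝ)) * (((n+1:ℕ):ℝ) / Real.exp 1) ^ (n+1)) :=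
    rfl
  have hc : (0:ℝ) < ((n+1:ℕ):ℝ) := by positivity
  have hden : 0 < Real.sqrt (2 * ((n+1:ℕ):ℝ)) * (((n+1:ℕ):ℝ) / Real.exp 1) ^ (n+1) := by
    positivity
  rw [hdef, div_le_iff₀ hden] at h1
  calc ((n+1).factorial : ℝ) ≤ Real.exp 1 / Real.sqrt 2 *
        (Real.sqrt (2 * ((n+1:ℕ):ℝ)) * (((n+1:ℕ):ℝ) / Real.exp 1) ^ (n+1)) := h1
    _ = Real.exp 1 * Real.sqrt ((n+1:ℕ):ℝ) * (((n+1:ℕ):ℝ) / Real.exp 1) ^ (n+1) := by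
        rw [Real.sqrt_mul (by norm_num)]
        have h2 : (0:ℝ) < Real.sqrt 2 := by positivity
        field_simp

lemma exp_le_inv_one_sub {x : ℝ} (hx : x < 1) : Real.exp x ≤ (1 - x)⁻¹ := by
  have h1 : 1 - x ≤ Real.exp (-x) := by
    have := Real.add_one_le_exp (-x); linarith
  have h2 : 0 < 1 - x := by linarith
  rw [Real.exp_neg x] at h1
  have := Real.exp_pos x
  rw [le_inv_comm₀ h2 (by positivity)] at h1
  exact h1

lemma tendsto_Lk : Tendsto (fun k : ℕ => Lk k / k) atTop (nhds 0) := by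
  have hnat : Tendsto (fun k : ℕ => Real.log k / k) atTop (nhds 0) :=
    Real.isLittleO_log_id_atTop.tendsto_div_nhds_zero.comp tendsto_natCast_atTop_atTop
  have hupper : Tendsto (fun k : ℕ =>
      (Real.log Real.pi + Real.exp 1 ^ 2 / 2) / k + 4 * (Real.log k / k)) atTop (nhds 0) := by
    have := (tendsto_const_div_atTop_nhds_zero_nat
      (Real.log Real.pi + Real.exp 1 ^ 2 / 2)).add (hnat.const_mul 4)
    simpa using this
  apply squeeze_zero' ?_ ?_ hupper
  · filter_upwards [eventually_ge_atTop 3] with k hk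
    have hk3 : (3:ℝ) ≤ (k:ℝ) := by exact_mod_cast hk
    have h1 : (1:ℝ) ≤ Real.log k := by
      rw [Real.le_log_iff_exp_le (by positivity)]
      calc Real.exp 1 ≤ 2.7182818286 := (Real.exp_one_lt_d9).le
        _ ≤ (3:ℝ) := by norm_num
        _ ≤ (k:ℝ) := hk3
    have hX1 : (1:ℝ) ≤ Xk k := by
      unfold Xk
      have hpi : (1:ℝ) ≤ Real.pi := by linarith [Real.pi_gt_three]
      have he : (1:ℝ) ≤ Real.exp (Real.exp 1 ^ 2 / 2) := by
        rw [Real.one_le_exp_iff]; positivity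
      have hkc : (1:ℝ) ≤ (k:ℝ)^3 := one_le_pow₀ (by linarith)
      calc (1:ℝ) = 1 * 1 * 1 * 1 := by norm_num
        _ ≤ Real.pi * Real.exp (Real.exp 1 ^ 2 / 2) * (k:ℝ)^3 * Real.log k := by
            gcongr <;> linarith
    have : 0 ≤ Lk k := Real.log_nonneg hX1
    positivity
  · filter_upwards [eventually_ge_atTop 3] with k hk
    have hk3 : (3:ℝ) ≤ (k:ℝ) := by exact_mod_cast hk
    have hkpos : (0:ℝ) < k := by linarith
    have hlogpos : 0 < Real.log k := Real.log_pos (by linarith)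
    have hLk : Lk k = Real.log Real.pi + Real.exp 1 ^ 2 / 2 + 3 * Real.log k
        + Real.log (Real.log k) := by
      unfold Lk Xk
      rw [Real.log_mul (by positivity) hlogpos.ne', Real.log_mul (by positivity) (by positivity),
        Real.log_mul Real.pi_ne_zero (Real.exp_ne_zero _), Real.log_exp, Real.log_pow]
      push_cast; ring
    have hloglog : Real.log (Real.log k) ≤ Real.log k :=
      Real.log_le_log hlogpos (Real.log_le_self hkpos.le)
    have hle : Lk k ≤ Real.log Real.pi + Real.exp 1 ^ 2 / 2 + 4 * Real.log k := by
      rw [hLk]; linarith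
    calc Lk k / (k:ℝ) ≤ (Real.log Real.pi + Real.exp 1 ^ 2 / 2 + 4 * Real.log k) / (k:ℝ) := by
          gcongr
      _ = (Real.log Real.pi + Real.exp 1 ^ 2 / 2) / k + 4 * (Real.log k / k) := by ring


set_option maxHeartbeats 2000000

/-- For all sufficiently large `k`, with
`n = ⌊(k/e)²·(π·e^{e²/2}·k³·ln k)^{1/k}⌋`, one has `n·ln n < C(n,k)·(1/k!)`. -/
theorem n_log_n_lt_choose_div_factorial :
    ∃ k₀ : ℕ, ∀ k : ℕ, k₀ ≤ k →
      ∀ n : ℕ, n = ⌊((k : ℝ) / Real.exp 1) ^ 2 *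
          (Real.pi * Real.exp (Real.exp 1 ^ 2 / 2) * (k : ℝ) ^ 3 * Real.log k)
            ^ (1 / (k : ℝ))⌋₊ →
        (n : ℝ) * Real.log n < (n.choose k : ℝ) * (1 / (k.factorial : ℝ)) := by
  have hsmall : ∀ᶠ k : ℕ in atTop, Lk k / k < 1/25 :=
    tendsto_Lk.eventually_lt_const (by norm_num)
  have key : ∀ᶠ k : ℕ in atTop, ∀ n : ℕ, n = ⌊((k : ℝ) / Real.exp 1) ^ 2 *
          (Real.pi * Real.exp (Real.exp 1 ^ 2 / 2) * (k : ℝ) ^ 3 * Real.log k)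
            ^ (1 / (k : ℝ))⌋₊ →
        (n : ℝ) * Real.log n < (n.choose k : ℝ) * (1 / (k.factorial : ℝ)) := by
    filter_upwards [eventually_ge_atTop 1000, hsmall] with k hk hL25
    intro n hn
    have hn' : n = ⌊Ak k⌋₊ := by unfold Ak Xk; exact hn
    -- basic numeric facts
    set K : ℝ := (k : ℝ) with hKdef
    have hK : (1000 : ℝ) ≤ K := by rw [hKdef]; exact_mod_cast hk
    have hKpos : (0:ℝ) < K := by linarith
    have hepos : (0:ℝ) < Real.exp 1 := Real.exp_pos 1
    have he_lo : (27182818283/10000000000 : ℝ) < Real.exp 1 :=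
      lt_of_le_of_lt (le_of_eq (by norm_num)) Real.exp_one_gt_d9
    have he_hi : Real.exp 1 < (27182818286/10000000000 : ℝ) :=
      lt_of_lt_of_le Real.exp_one_lt_d9 (le_of_eq (by norm_num))
    have he2_lo : (369/50 : ℝ) ≤ Real.exp 1 ^ 2 := by nlinarith [he_lo, hepos]
    have he2_hi : Real.exp 1 ^ 2 ≤ (37/5 : ℝ) := by nlinarith [he_hi, hepos]
    have hlogK1 : (1:ℝ) ≤ Real.log K := by
      rw [Real.le_log_iff_exp_le (by positivity)]
      calc Real.exp 1 ≤ Real.exp 1 * Real.exp 1 := by nlinarith [hepos, he_lo]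
        _ = Real.exp 1 ^ 2 := by ring
        _ ≤ 37/5 := he2_hi
        _ ≤ K := by linarith
    have hXpos : 0 < Xk k := Xk_pos (by omega)
    have hL0 : 0 ≤ Lk k := by
      apply Real.log_nonneg
      unfold Xk
      have hpi : (1:ℝ) ≤ Real.pi := by linarith [Real.pi_gt_three]
      have he : (1:ℝ) ≤ Real.exp (Real.exp 1 ^ 2 / 2) := by
        rw [Real.one_le_exp_iff]; positivity
      have hkc : (1:ℝ) ≤ (k:ℝ)^3 := one_le_pow₀ (by linarith)
      calc (1:ℝ) = 1 * 1 * 1 * 1 := by norm_num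
        _ ≤ Real.pi * Real.exp (Real.exp 1 ^ 2 / 2) * (k:ℝ)^3 * Real.log k := by
            gcongr <;> linarith
    have hLK : 0 ≤ Lk k / K := by positivity
    -- the rpow as an exponential
    have hu : Xk k ^ (1 / K) = Real.exp (Lk k / K) := by
      rw [Real.rpow_def_of_pos hXpos, mul_one_div]; rfl
    have hA_eq : Ak k = K ^ 2 / Real.exp 1 ^ 2 * Real.exp (Lk k / K) := by
      unfold Ak; rw [hu, div_pow]
    have hu1 : 1 ≤ Real.exp (Lk k / K) := Real.one_le_exp hLK
    have hu2 : Real.exp (Lk k / K) ≤ 25/24 := by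
      calc Real.exp (Lk k / K) ≤ Real.exp (1/25) := Real.exp_le_exp.mpr hL25.le
        _ ≤ (1 - 1/25)⁻¹ := exp_le_inv_one_sub (by norm_num)
        _ = 25/24 := by norm_num
    have hApos : 0 < Ak k := by rw [hA_eq]; positivity
    have hA_lb2 : K ^ 2 ≤ Real.exp 1 ^ 2 * Ak k := by
      have h : Real.exp 1 ^ 2 * (K ^ 2 / Real.exp 1 ^ 2 * Real.exp (Lk k / K))
          = K ^ 2 * Real.exp (Lk k / K) := by
        field_simp
      rw [hA_eq, h]
      nlinarith [sq_nonneg K, hu1]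
    have hA_lb : K ^ 2 / (37/5 : ℝ) ≤ Ak k := by
      rw [div_le_iff₀ (by norm_num)]
      nlinarith [hA_lb2, hApos, he2_hi]
    -- bounds on n
    have hn_le : (n : ℝ) ≤ Ak k := by rw [hn']; exact Nat.floor_le hApos.le
    have hn_gt : Ak k - 1 < (n : ℝ) := by rw [hn']; exact Nat.sub_one_lt_floor _
    have hK2 : 1000 * K ≤ K ^ 2 := by nlinarith [hK, hKpos]
    have hn_big : K ^ 2 / (37/5:ℝ) - 1 ≤ (n:ℝ) := by linarith
    have hn_big' : 100 * K - 1 ≤ (n:ℝ) := by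
      have : 100 * K ≤ K ^ 2 / (37/5:ℝ) := by linarith [hK2, hK]
      linarith
    have hn_pos : (0:ℝ) < n := by linarith
    have hn1 : (1:ℝ) ≤ (n:ℝ) := by linarith
    have hKn : K + 1 ≤ (n:ℝ) := by linarith
    have hkn : k ≤ n := by
      have h : K ≤ (n:ℝ) := by linarith
      rw [hKdef] at h
      exact_mod_cast h
    -- LHS bound
    have hlogA : Real.log (Ak k) = 2 * Real.log K - 2 + Lk k / K := by
      rw [hA_eq, Real.log_mul (by positivity) (Real.exp_pos _).ne',
        Real.log_div (by positivity) (by positivity), Real.log_exp,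
        Real.log_pow, Real.log_pow, Real.log_exp]
      push_cast; ring
    have hLHS : (n:ℝ) * Real.log n ≤ Ak k * Real.log (Ak k) := by
      apply mul_le_mul hn_le (Real.log_le_log hn_pos hn_le) (Real.log_nonneg hn1) hApos.le
    have hAlogA : Ak k * Real.log (Ak k) ≤ 25/12 * (K^2 * Real.log K / Real.exp 1 ^ 2) := by
      rw [hlogA, hA_eq]
      have hB0 : 0 ≤ 2 * Real.log K - 2 + Lk k / K := by linarith
      have hB2 : 2 * Real.log K - 2 + Lk k / K ≤ 2 * Real.log K := by linarith
      have hq : 0 < Real.exp 1 ^ 2 := by positivity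
      have h1 : Real.exp (Lk k / K) * (2 * Real.log K - 2 + Lk k / K) ≤
          25/24 * (2 * Real.log K) := mul_le_mul hu2 hB2 hB0 (by norm_num)
      calc K ^ 2 / Real.exp 1 ^ 2 * Real.exp (Lk k / K) * (2 * Real.log K - 2 + Lk k / K)
          = K ^ 2 / Real.exp 1 ^ 2 * (Real.exp (Lk k / K) * (2 * Real.log K - 2 + Lk k / K)) := by
            ring
        _ ≤ K ^ 2 / Real.exp 1 ^ 2 * (25/24 * (2 * Real.log K)) := by
            apply mul_le_mul_of_nonneg_left h1 (by positivity)
        _ = 25/12 * (K^2 * Real.log K / Real.exp 1 ^ 2) := by ring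
    -- RHS lower bound
    have hfac := factorial_le_stirling k (by omega)
    have hfac2 : ((k.factorial : ℝ))^2 ≤ Real.exp 1 ^ 2 * K * (K^2 / Real.exp 1 ^ 2)^k := by
      have h1 : ((k.factorial : ℝ))^2 ≤ (Real.exp 1 * Real.sqrt K * (K / Real.exp 1) ^ k)^2 :=
        pow_le_pow_left₀ (by positivity) hfac 2
      calc ((k.factorial : ℝ))^2 ≤ (Real.exp 1 * Real.sqrt K * (K / Real.exp 1) ^ k)^2 := h1
        _ = Real.exp 1 ^ 2 * (Real.sqrt K)^2 * ((K / Real.exp 1) ^ 2)^k := by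
            ring
        _ = Real.exp 1 ^ 2 * K * (K^2 / Real.exp 1 ^ 2)^k := by
            rw [Real.sq_sqrt hKpos.le, div_pow]
    -- the descending factorial product
    have hterm : ∀ i ∈ Finset.range k,
        Real.log (n:ℝ) - (i:ℝ)/((n:ℝ) - K) ≤ Real.log ((n:ℝ) - i) := by
      intro i hi
      have hik : i < k := Finset.mem_range.mp hi
      have hi1 : (i:ℝ) ≤ K - 1 := by
        have h : (i:ℝ) + 1 ≤ (k:ℝ) := by exact_mod_cast hik
        rw [← hKdef] at h
        linarith
      have hx : (0:ℝ) < (n:ℝ) - i := by linarith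
      have hnK : (0:ℝ) < (n:ℝ) - K := by linarith
      have hratio : (0:ℝ) < ((n:ℝ) - i) / (n:ℝ) := by positivity
      have key := Real.one_sub_inv_le_log_of_pos hratio
      rw [Real.log_div hx.ne' hn_pos.ne'] at key
      have hinv : (((n:ℝ) - i) / (n:ℝ))⁻¹ = (n:ℝ) / ((n:ℝ) - i) := by
        rw [inv_div]
      rw [hinv] at key
      have h2 : (n:ℝ) / ((n:ℝ) - i) - 1 = (i:ℝ) / ((n:ℝ) - i) := by
        field_simp
        ring
      have h3 : (i:ℝ) / ((n:ℝ) - i) ≤ (i:ℝ) / ((n:ℝ) - K) := by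
        gcongr <;> first | positivity | linarith
      linarith
    have hsum_i : ∑ i ∈ Finset.range k, (i:ℝ) = K * (K - 1) / 2 := by
      have h := Finset.sum_range_id_mul_two k
      have h2 : ((∑ i ∈ Finset.range k, i : ℕ) : ℝ) * 2 = K * (K - 1) := by
        rw_mod_cast [h]
        rw [Nat.cast_mul, Nat.cast_sub (by omega : 1 ≤ k)]
        push_cast; ring
      rw [Nat.cast_sum] at h2
      linarith
    have hnKpos : (0:ℝ) < (n:ℝ) - K := by linarith
    have hsum_bound : (K * (K - 1) / 2) / ((n:ℝ) - K) ≤ Real.exp 1 ^ 2 / 2 + 1/10 := by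
      rw [div_le_iff₀ hnKpos]
      have hp : Real.exp 1 ^ 2 * (Ak k - 1) ≤ Real.exp 1 ^ 2 * (n:ℝ) :=
        mul_le_mul_of_nonneg_left hn_gt.le (by positivity)
      have hq1 : K^2 - Real.exp 1 ^ 2 * (1 + K) ≤ Real.exp 1 ^ 2 * ((n:ℝ) - K) := by
        nlinarith [hp, hA_lb2]
      have hnK2 : K^2/8 ≤ (n:ℝ) - K := by linarith [hn_big, hK2, hK]
      nlinarith [hq1, hnK2, hK2, hK, he2_hi, he2_lo]
    have hsum_log : (k:ℝ) * Real.log (n:ℝ) - (Real.exp 1 ^ 2 / 2 + 1/10) ≤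
        ∑ i ∈ Finset.range k, Real.log ((n:ℝ) - i) := by
      have h1 := Finset.sum_le_sum hterm
      have h2 : ∑ i ∈ Finset.range k, (Real.log (n:ℝ) - (i:ℝ)/((n:ℝ) - K))
          = (k:ℝ) * Real.log (n:ℝ) - (K * (K - 1) / 2) / ((n:ℝ) - K) := by
        rw [Finset.sum_sub_distrib, Finset.sum_const, Finset.card_range, ← Finset.sum_div, hsum_i]
        push_cast; ring
      rw [h2] at h1
      linarith
    -- log n ≥ log Ak - 1/(10K)
    have hA1 : 10 * K + 1 ≤ Ak k := by linarith [hA_lb, hK2, hK]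
    have hlogn_ge : Real.log (Ak k) - 1/(10*K) ≤ Real.log (n:ℝ) := by
      have hA1pos : (0:ℝ) < Ak k - 1 := by linarith
      have hratio : (0:ℝ) < (Ak k - 1) / Ak k := by positivity
      have key := Real.one_sub_inv_le_log_of_pos hratio
      rw [Real.log_div hA1pos.ne' hApos.ne'] at key
      have hinv : ((Ak k - 1) / Ak k)⁻¹ = Ak k / (Ak k - 1) := by rw [inv_div]
      rw [hinv] at key
      have h2 : Ak k / (Ak k - 1) - 1 = 1 / (Ak k - 1) := by field_simp; ring
      have h3 : 1 / (Ak k - 1) ≤ 1 / (10*K) := by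
        apply one_div_le_one_div_of_le (by positivity) (by linarith)
      have h4 : Real.log (Ak k - 1) ≤ Real.log (n:ℝ) :=
        Real.log_le_log hA1pos (by linarith)
      linarith
    -- product lower bound
    have hprod_pos : ∀ i ∈ Finset.range k, (0:ℝ) < (n:ℝ) - i := by
      intro i hi
      have hik : i < k := Finset.mem_range.mp hi
      have h : (i:ℝ) + 1 ≤ (k:ℝ) := by exact_mod_cast hik
      rw [← hKdef] at h
      linarith
    have hprod_eq : ∏ i ∈ Finset.range k, ((n:ℝ) - i) =
        Real.exp (∑ i ∈ Finset.range k, Real.log ((n:ℝ) - i)) := by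
      rw [Real.exp_sum]
      exact (Finset.prod_congr rfl fun i hi => (Real.exp_log (hprod_pos i hi)).symm)
    have hklogn : (k:ℝ) * Real.log (Ak k) - 1/10 ≤ (k:ℝ) * Real.log (n:ℝ) := by
      have h1 := mul_le_mul_of_nonneg_left hlogn_ge (by positivity : (0:ℝ) ≤ (k:ℝ))
      rw [mul_sub] at h1
      have h2 : (k:ℝ) * (1/(10*K)) = 1/10 := by
        rw [← hKdef]; field_simp
      linarith
    have hexp_klogA : Real.exp ((k:ℝ) * Real.log (Ak k)) = Ak k ^ k := by
      rw [Real.exp_nat_mul, Real.exp_log hApos]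
    have hAk_pow : Ak k ^ k = (K^2 / Real.exp 1 ^ 2)^k * Xk k := by
      have hexpk : Real.exp (Lk k / K) ^ k = Xk k := by
        rw [← Real.exp_nat_mul]
        have harg : (k:ℝ) * (Lk k / K) = Lk k := by
          rw [← hKdef]; field_simp
        rw [harg]
        simp only [Lk]
        exact Real.exp_log hXpos
      rw [hA_eq, mul_pow, hexpk]
    have hprod_lb : (K^2 / Real.exp 1 ^ 2)^k * (Real.pi * K^3 * Real.log K) * (4/5) ≤
        ∏ i ∈ Finset.range k, ((n:ℝ) - i) := by
      rw [hprod_eq]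
      have h1 : (k:ℝ) * Real.log (Ak k) - (Real.exp 1 ^ 2 / 2 + 1/5) ≤
          ∑ i ∈ Finset.range k, Real.log ((n:ℝ) - i) := by
        have := hsum_log
        linarith
      calc (K^2 / Real.exp 1 ^ 2)^k * (Real.pi * K^3 * Real.log K) * (4/5)
          ≤ (K^2 / Real.exp 1 ^ 2)^k * (Real.pi * K^3 * Real.log K) *
            Real.exp (-(Real.exp 1 ^ 2 / 2 + 1/5) + Real.exp 1 ^ 2 / 2) := by
            have hexp45 : (4/5 : ℝ) ≤ Real.exp (-(Real.exp 1 ^ 2 / 2 + 1/5) + Real.exp 1 ^ 2 / 2) := by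
              have : (-(Real.exp 1 ^ 2 / 2 + 1/5) + Real.exp 1 ^ 2 / 2 : ℝ) = -(1/5) := by ring
              rw [this]
              have h5 : Real.exp (1/5) ≤ (1 - 1/5)⁻¹ := exp_le_inv_one_sub (by norm_num)
              rw [Real.exp_neg]
              have : ((1:ℝ) - 1/5)⁻¹ = 5/4 := by norm_num
              rw [this] at h5
              calc (4/5 : ℝ) = ((5:ℝ)/4)⁻¹ := by norm_num
                _ ≤ (Real.exp (1/5))⁻¹ := by
                    apply inv_anti₀ (Real.exp_pos _) h5
            apply mul_le_mul_of_nonneg_left hexp45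
            have hpi : (0:ℝ) < Real.pi := Real.pi_pos
            positivity
        _ = (K^2 / Real.exp 1 ^ 2)^k * Xk k * Real.exp (-(Real.exp 1 ^ 2 / 2 + 1/5)) := by
            unfold Xk
            rw [Real.exp_add]
            ring
        _ = Real.exp ((k:ℝ) * Real.log (Ak k)) * Real.exp (-(Real.exp 1 ^ 2 / 2 + 1/5)) := by
            rw [hexp_klogA, hAk_pow]
        _ = Real.exp ((k:ℝ) * Real.log (Ak k) - (Real.exp 1 ^ 2 / 2 + 1/5)) := by
            rw [← Real.exp_add]; ring_nf
        _ ≤ Real.exp (∑ i ∈ Finset.range k, Real.log ((n:ℝ) - i)) := Real.exp_le_exp.mpr h1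
    -- descending factorial cast
    have hdesc : (n.descFactorial k : ℝ) = ∏ i ∈ Finset.range k, ((n:ℝ) - i) := by
      rw [Nat.descFactorial_eq_prod_range, Nat.cast_prod]
      exact Finset.prod_congr rfl fun i hi =>
        Nat.cast_sub (((Finset.mem_range.mp hi).trans_le hkn).le)
    have hchoose : (n.choose k : ℝ) * (1 / (k.factorial : ℝ)) =
        (n.descFactorial k : ℝ) / ((k.factorial : ℝ))^2 := by
      have h := Nat.descFactorial_eq_factorial_mul_choose n k
      have hfne : ((k.factorial : ℕ) : ℝ) ≠ 0 := by
        exact_mod_cast k.factorial_ne_zero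
      have h2 : (n.descFactorial k : ℝ) = (k.factorial : ℝ) * (n.choose k : ℝ) := by
        exact_mod_cast congrArg (Nat.cast : ℕ → ℝ) h
      rw [h2]
      field_simp
    -- final comparison
    have hfacpos : (0:ℝ) < ((k.factorial : ℝ))^2 := by
      have := k.factorial_pos
      positivity
    have hRHS : (K^2 / Real.exp 1 ^ 2)^k * (Real.pi * K^3 * Real.log K) * (4/5) /
        (Real.exp 1 ^ 2 * K * (K^2 / Real.exp 1 ^ 2)^k) ≤
        (n.choose k : ℝ) * (1 / (k.factorial : ℝ)) := by
      rw [hchoose, hdesc]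
      apply div_le_div₀ (Finset.prod_nonneg fun i hi => (hprod_pos i hi).le) hprod_lb hfacpos hfac2
    have hsimp : (K^2 / Real.exp 1 ^ 2)^k * (Real.pi * K^3 * Real.log K) * (4/5) /
        (Real.exp 1 ^ 2 * K * (K^2 / Real.exp 1 ^ 2)^k) =
        4/5 * Real.pi * (K^2 * Real.log K / Real.exp 1 ^ 2) := by
      have hpk : (0:ℝ) < (K^2 / Real.exp 1 ^ 2)^k := by positivity
      field_simp
    rw [hsimp] at hRHS
    have hfinal : 25/12 * (K^2 * Real.log K / Real.exp 1 ^ 2) <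
        4/5 * Real.pi * (K^2 * Real.log K / Real.exp 1 ^ 2) := by
      have hpos : (0:ℝ) < K^2 * Real.log K / Real.exp 1 ^ 2 := by positivity
      have hπQ : 3 * (K^2 * Real.log K / Real.exp 1 ^ 2) <
          Real.pi * (K^2 * Real.log K / Real.exp 1 ^ 2) :=
        mul_lt_mul_of_pos_right Real.pi_gt_three hpos
      linarith
    linarith
  obtain ⟨k₀, hk₀⟩ := eventually_atTop.mp key
  exact ⟨k₀, fun k hk n hn => hk₀ k hk n hn⟩
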